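/- Let X be a nonempty set with d : X × X → ℝ satisfying: d(x,y) ≥ 0 with d(x,y)=0 iff x=y; d(x,y)=d(y,x); and the rectangular inequality d(x,y) ≤ d(x,w)+d(w,z)+d(z,y) for all x,y and distinct w,z ∈ X \ {x,y}. Suppose (X,d) is complete (every d-Cauchy sequence converges) and T,S : X → X with T continuous, injective, and subsequentially convergent, and λ ∈ [0,1/2) with d(T(S x), T(S y)) ≤ λ·(d(T x, T(S x)) + d(T y, T(S y))) for all x,y ∈ X. Then S has a unique fixed point. -/

import Mathlib

open Filter Topology

theorem extended_kannan_generalized_metric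
    {X : Type*} [Nonempty X] (d : X → X → ℝ)
    (hd_nonneg : ∀ x y, 0 ≤ d x y)
    (hd_eq : ∀ x y, d x y = 0 ↔ x = y)
    (hd_symm : ∀ x y, d x y = d y x)
    (hd_rect : ∀ x y w z : X, w ≠ z → w ≠ x → w ≠ y → z ≠ x → z ≠ y →
      d x y ≤ d x w + d w z + d z y)
    (hcomplete : ∀ u : ℕ → X,
      (∀ ε : ℝ, 0 < ε → ∃ N, ∀ m ≥ N, ∀ n ≥ N, d (u m) (u n) < ε) →
      ∃ L : X, Tendsto (fun n => d (u n) L) atTop (𝓝 0))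
    (T S : X → X)
    (hTc : ∀ (u : ℕ → X) (L : X), Tendsto (fun n => d (u n) L) atTop (𝓝 0) →
      Tendsto (fun n => d (T (u n)) (T L)) atTop (𝓝 0))
    (hTi : Function.Injective T)
    (hTsub : ∀ u : ℕ → X,
      (∃ L : X, Tendsto (fun n => d (T (u n)) L) atTop (𝓝 0)) →
      ∃ (z : X) (φ : ℕ → ℕ), StrictMono φ ∧
        Tendsto (fun k => d (u (φ k)) z) atTop (𝓝 0))
    (lam : ℝ) (hlam0 : 0 ≤ lam) (hlam : lam < 1/2)
    (h : ∀ x y : X, d (T (S x)) (T (S y)) ≤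
      lam * (d (T x) (T (S x)) + d (T y) (T (S y)))) :
    ∃! u : X, S u = u := by
  classical
  obtain ⟨x0⟩ := ‹Nonempty X›
  have huniq : ∀ u v : X, S u = u → S v = v → u = v := by
    intro u v hu hv
    have h1 := h u v
    rw [hu, hv] at h1
    have h2 : d (T u) (T u) = 0 := (hd_eq _ _).2 rfl
    have h3 : d (T v) (T v) = 0 := (hd_eq _ _).2 rfl
    have h4 : d (T u) (T v) ≤ 0 := by rw [h2, h3] at h1; linarith
    exact hTi ((hd_eq _ _).1 (le_antisymm h4 (hd_nonneg _ _)))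
  set x : ℕ → X := fun n => S^[n] x0 with hxdef
  have hx : ∀ n, x (n+1) = S (x n) := fun n => Function.iterate_succ_apply' S n x0
  by_cases hfix : ∃ n, S (x n) = x n
  · obtain ⟨n, hn⟩ := hfix
    exact ⟨x n, hn, fun y hy => huniq y (x n) hy hn⟩
  push_neg at hfix
  set c : ℝ := lam / (1 - lam) with hcdef
  have h1l : (0:ℝ) < 1 - lam := by linarith
  have hc0 : 0 ≤ c := div_nonneg hlam0 h1l.le
  have hc1 : c < 1 := by rw [hcdef, div_lt_one h1l]; linarith
  have hD : (0:ℝ) < 1 - c := by linarith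
  set a : ℕ → ℝ := fun n => d (T (x n)) (T (x (n+1))) with hadef
  have ha0 : ∀ n, 0 ≤ a n := fun n => hd_nonneg _ _
  have hstep : ∀ n, a (n+1) ≤ c * a n := by
    intro n
    have h1 := h (x n) (x (n+1))
    rw [← hx n, ← hx (n+1)] at h1
    have h1' : a (n+1) ≤ lam * (a n + a (n+1)) := h1
    rw [hcdef, div_mul_eq_mul_div, le_div_iff₀ h1l]
    nlinarith
  have hpow : ∀ n k, a (n+k) ≤ c^k * a n := by
    intro n k
    induction k with
    | zero => simp
    | succ k ih =>
      have h1 : a (n+k+1) ≤ c * a (n+k) := hstep (n+k)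
      have h2 : c * a (n+k) ≤ c * (c^k * a n) :=
        mul_le_mul_of_nonneg_left ih hc0
      calc a (n + (k+1)) = a (n+k+1) := by ring_nf
        _ ≤ c * (c^k * a n) := h1.trans h2
        _ = c^(k+1) * a n := by ring
  have ha : ∀ n, a n ≤ c^n * a 0 := by
    intro n
    have := hpow 0 n
    simpa using this
  have hapos : ∀ n, 0 < a n := by
    intro n
    rcases lt_or_eq_of_le (ha0 n) with h'|h'
    · exact h'
    · exfalso
      have hT : T (x n) = T (x (n+1)) := (hd_eq _ _).1 h'.symm
      have : x n = x (n+1) := hTi hT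
      exact hfix n (by rw [← hx n, ← this])
  have hinj : ∀ {n m : ℕ}, n < m → x n ≠ x m := by
    intro n m hnm heq
    have h2 : x (m+1) = x (n+1) := by rw [hx m, hx n, heq]
    have hxa : a m = a n := by simp only [hadef]; rw [h2, ← heq]
    obtain ⟨k, hk⟩ : ∃ k, m = n + (k+1) := ⟨m - n - 1, by omega⟩
    have h3 : a m ≤ c^(k+1) * a n := hk ▸ hpow n (k+1)
    have h4 : c^(k+1) < 1 := pow_lt_one₀ hc0 hc1 (Nat.succ_ne_zero k)
    have h5 := hapos n
    nlinarith [h3, hxa, mul_lt_mul_of_pos_right h4 h5]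
  have hTne : ∀ {i j : ℕ}, i ≠ j → T (x i) ≠ T (x j) := by
    intro i j hij he
    rcases Ne.lt_or_gt hij with h'|h'
    · exact hinj h' (hTi he)
    · exact hinj h' (hTi he).symm
  -- chain bound
  have hpoly : c + c^2 - c^3 ≤ 1 := by nlinarith [sq_nonneg (1-c), hc0]
  have hB : ∀ k n, d (T (x (n+1))) (T (x (n+k+2))) ≤ a 0 * c^n / (1-c) := by
    intro k
    induction k using Nat.strong_induction_on with
    | _ k ih =>
      intro n
      have hq : 0 ≤ a 0 * c^n := mul_nonneg (ha0 0) (pow_nonneg hc0 n)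
      have hcn : 0 ≤ c^n := pow_nonneg hc0 n
      match k with
      | 0 =>
        rw [le_div_iff₀ hD]
        have key := ha (n+1)
        rw [pow_succ] at key
        have hgoal : a (n+1) * (1-c) ≤ a 0 * c^n := by
          nlinarith [ha0 (n+1), mul_nonneg (ha0 (n+1)) hc0,
            mul_nonneg (mul_nonneg hcn hc0) (ha0 0)]
        have e : n + 0 + 2 = (n+1) + 1 := by omega
        rw [e]
        exact hgoal
      | 1 =>
        rw [le_div_iff₀ hD]
        have hb := h (x n) (x (n+2))
        rw [← hx n, ← hx (n+2)] at hb
        have e : n + 2 + 1 = n + 1 + 2 := by omega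
        rw [e] at hb
        -- hb : d (T (x (n+1))) (T (x (n+1+2))) ≤ lam * (a n + a (n+2))
        have h1 := ha n
        have h2 := ha (n+2)
        rw [pow_succ, pow_succ] at h2
        have hbnn : 0 ≤ d (T (x (n+1))) (T (x (n+1+2))) := hd_nonneg _ _
        nlinarith [hb, mul_nonneg hbnn hc0, mul_nonneg (mul_nonneg hcn hc0) (ha0 0),
          mul_nonneg (mul_nonneg (mul_nonneg hcn hc0) hc0) (ha0 0), sq_nonneg c]
      | (k+2) =>
        have hrect := hd_rect (T (x (n+1))) (T (x (n+k+4))) (T (x (n+2))) (T (x (n+3)))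
          (hTne (by omega)) (hTne (by omega)) (hTne (by omega))
          (hTne (by omega)) (hTne (by omega))
        have hih := ih k (by omega) (n+2)
        have e1 : n + 2 + 1 = n + 3 := by omega
        have e2 : n + 2 + k + 2 = n + k + 4 := by omega
        rw [e1, e2] at hih
        have e3 : n + (k+2) + 2 = n + k + 4 := by omega
        rw [e3, le_div_iff₀ hD]
        have h1 := ha (n+1)
        have h2 := ha (n+2)
        rw [pow_succ] at h1
        rw [pow_succ, pow_succ] at h2
        rw [le_div_iff₀ hD] at hih
        -- hih : d (T (x (n+3))) (T (x (n+k+4))) * (1-c) ≤ a 0 * c^(n+2)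
        rw [pow_succ, pow_succ] at hih
        have hdnn : 0 ≤ d (T (x (n+1))) (T (x (n+k+4))) := hd_nonneg _ _
        -- goal : d (T (x (n+1))) (T (x (n+k+4))) * (1-c) ≤ a 0 * c^n
        nlinarith [hrect, hih, h1, h2, ha0 (n+1), ha0 (n+2),
          hd_nonneg (T (x (n+3))) (T (x (n+k+4))),
          mul_nonneg hq (mul_nonneg hc0 hc0), mul_nonneg hq hc0,
          mul_nonneg (mul_nonneg hq hc0) hc0,
          mul_nonneg (hd_nonneg (T (x (n+1))) (T (x (n+k+4)))) hc0]
  -- Cauchy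
  have hten : Tendsto (fun n : ℕ => a 0 * c^n / (1-c)) atTop (𝓝 0) := by
    have h1 := tendsto_pow_atTop_nhds_zero_of_lt_one hc0 hc1
    have h2 : Tendsto (fun n : ℕ => a 0 * c^n / (1-c)) atTop (𝓝 (a 0 * 0 / (1-c))) :=
      (h1.const_mul (a 0)).div_const _
    simpa using h2
  have hcauchy : ∀ ε : ℝ, 0 < ε → ∃ N, ∀ m ≥ N, ∀ n ≥ N,
      d (T (x m)) (T (x n)) < ε := by
    intro ε hε
    have hev := (hten.eventually (gt_mem_nhds hε))
    rw [eventually_atTop] at hev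
    obtain ⟨N, hN⟩ := hev
    refine ⟨N+1, ?_⟩
    have key : ∀ m n, N+1 ≤ n → n < m → d (T (x n)) (T (x m)) < ε := by
      intro m n hn hnm
      have hBnm := hB (m - n - 1) (n - 1)
      have e1 : n - 1 + 1 = n := by omega
      have e2 : n - 1 + (m - n - 1) + 2 = m := by omega
      rw [e1, e2] at hBnm
      exact hBnm.trans_lt (hN (n-1) (by omega))
    intro m hm n hn
    rcases lt_trichotomy m n with h'|h'|h'
    · exact key n m hm h'
    · rw [h', (hd_eq _ _).2 rfl]; exact hε
    · rw [hd_symm]; exact key m n hn h'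
  obtain ⟨L, hL⟩ := hcomplete (fun n => T (x n)) hcauchy
  obtain ⟨z, φ, hφ, hz⟩ := hTsub x ⟨L, hL⟩
  have hTz : Tendsto (fun k => d (T (x (φ k))) (T z)) atTop (𝓝 0) :=
    hTc (fun k => x (φ k)) z hz
  have haz : Tendsto a atTop (𝓝 0) := by
    have h1 : Tendsto (fun n : ℕ => c^n * a 0) atTop (𝓝 0) := by
      have := (tendsto_pow_atTop_nhds_zero_of_lt_one hc0 hc1).mul_const (a 0)
      simpa using this
    exact squeeze_zero ha0 ha h1
  have haφ : Tendsto (fun k => a (φ k)) atTop (𝓝 0) := haz.comp hφ.tendsto_atTop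
  have hSz : S z = z := by
    by_contra hSz
    set δ := d (T z) (T (S z)) with hδdef
    have hδpos : 0 < δ := by
      rcases lt_or_eq_of_le (hd_nonneg (T z) (T (S z))) with h'|h'
      · exact h'
      · exact absurd (hTi ((hd_eq _ _).1 h'.symm)).symm hSz
    have hone : ∀ w : X, ∃ M, ∀ n ≥ M, x n ≠ w := by
      intro w
      by_cases hw : ∃ n, x n = w
      · obtain ⟨n0, hn0⟩ := hw
        exact ⟨n0+1, fun n hn he => hinj (show n0 < n by omega) (hn0.trans he.symm)⟩
      · exact ⟨0, fun n _ he => hw ⟨n, he⟩⟩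
    obtain ⟨M1, hM1⟩ := hone z
    obtain ⟨M2, hM2⟩ := hone (S z)
    have hsum : Tendsto (fun k => d (T (x (φ k))) (T z) + (1+lam) * a (φ k))
        atTop (𝓝 0) := by
      have := hTz.add (haφ.const_mul (1+lam))
      simpa using this
    have hev1 := hsum.eventually (gt_mem_nhds (show (0:ℝ) < (1-lam) * δ from
      mul_pos h1l hδpos))
    have hev2 : ∀ᶠ k in atTop, max M1 M2 ≤ φ k := by
      rw [eventually_atTop]
      exact ⟨max M1 M2, fun k hk => hk.trans (hφ.le_apply)⟩
    obtain ⟨k, hk1, hk2⟩ := (hev1.and hev2).exists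
    set i := φ k with hidef
    have hxi_z : x i ≠ z := hM1 i (by omega)
    have hxi_sz : x i ≠ S z := hM2 i (by omega)
    have hxi1_z : x (i+1) ≠ z := hM1 (i+1) (by omega)
    have hxi1_sz : x (i+1) ≠ S z := hM2 (i+1) (by omega)
    have hrect := hd_rect (T z) (T (S z)) (T (x i)) (T (x (i+1)))
      (hTne (by omega))
      (fun he => hxi_z (hTi he)) (fun he => hxi_sz (hTi he))
      (fun he => hxi1_z (hTi he)) (fun he => hxi1_sz (hTi he))
    have hcon := h (x i) z
    rw [← hx i] at hcon
    -- hcon : d (T (x (i+1))) (T (S z)) ≤ lam * (a i + δ)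
    have hsymm : d (T z) (T (x i)) = d (T (x i)) (T z) := hd_symm _ _
    rw [hsymm] at hrect
    have : (1 - lam) * δ ≤ d (T (x i)) (T z) + (1+lam) * a i := by
      have hmid : d (T (x i)) (T (x (i+1))) = a i := rfl
      nlinarith [hrect, hcon]
    linarith [hk1, this]
  exact ⟨z, hSz, fun y hy => huniq y z hy hSz⟩
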